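/- Let X be a metrizable topological space, Y a dense subspace of a metrizable compact space Ȳ, L a closed nowhere dense subset of X, D = X \ L, and Φ a multifunction assigning to each x ∈ L a nonempty compact subset Φ(x) ⊆ Ȳ, upper continuous on L. Then there exist a set A ⊆ D that is discrete (every point of A has a neighborhood in X meeting A only in that point), with closure(A) \ A = L, and a function f : A → Y such that the cluster set f̄(x) equals Φ(x) for every x ∈ L. -/

import Mathlib

open Set

/-- The cluster set of a function `f : A → Z` (for `A ⊆ X`) at a point `x ∈ X`:
the intersection over all neighborhoods `U` of `x` of the closures of `f (U ∩ A)`. -/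
def clusterSet {X Z : Type*} [TopologicalSpace X] [TopologicalSpace Z] {A : Set X}
    (f : A → Z) (x : X) : Set Z :=
  ⋂ U ∈ nhds x, closure (f '' {a : A | (a : X) ∈ U})

open Metric

section AuxLemmas

variable {X : Type*} [MetricSpace X]

lemma my_exists_maximal_separated (s : Set X) {ε : ℝ} (hε : 0 < ε) :
    ∃ M ⊆ s, (∀ x ∈ M, ∀ y ∈ M, x ≠ y → ε ≤ dist x y) ∧ ∀ x ∈ s, ∃ c ∈ M, dist x c < ε := by
  have hchain : ∀ c ⊆ {S : Set X | S ⊆ s ∧ ∀ x ∈ S, ∀ y ∈ S, x ≠ y → ε ≤ dist x y},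
      IsChain (· ⊆ ·) c → ∃ ub ∈ {S : Set X | S ⊆ s ∧ ∀ x ∈ S, ∀ y ∈ S, x ≠ y → ε ≤ dist x y},
        ∀ s ∈ c, s ⊆ ub := by
    intro c hc hchain
    refine ⟨⋃₀ c, ⟨?_, ?_⟩, fun S hS => subset_sUnion_of_mem hS⟩
    · exact sUnion_subset fun S hS => (hc hS).1
    · rintro a ⟨Sa, hSa, haSa⟩ b ⟨Sb, hSb, hbSb⟩ hab
      rcases hchain.total hSa hSb with hsub | hsub
      · exact (hc hSb).2 a (hsub haSa) b hbSb hab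
      · exact (hc hSa).2 a haSa b (hsub hbSb) hab
  obtain ⟨M, hM⟩ := zorn_subset
      {S : Set X | S ⊆ s ∧ ∀ x ∈ S, ∀ y ∈ S, x ≠ y → ε ≤ dist x y} hchain
  · refine ⟨M, hM.prop.1, hM.prop.2, ?_⟩
    intro x hx
    by_contra h
    push_neg at h
    have hsep : ∀ c ∈ M, ε ≤ dist x c := h
    have hxM : x ∉ M := by
      intro hxM
      have := hsep x hxM
      simp [dist_self] at this
      linarith
    have hmem : insert x M ∈ {S : Set X | S ⊆ s ∧ ∀ x ∈ S, ∀ y ∈ S, x ≠ y → ε ≤ dist x y} := by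
      constructor
      · exact insert_subset hx hM.prop.1
      · rintro a (rfl | ha) b (rfl | hb) hab
        · exact absurd rfl hab
        · exact hsep b hb
        · rw [dist_comm]; exact hsep a ha
        · exact hM.prop.2 a ha b hb hab
    have := hM.2 hmem (subset_insert x M)
    exact hxM (this (mem_insert x M))

lemma my_infinite_compl_inter_ball {L : Set X} (hLnd : interior (closure L) = ∅)
    {x : X} (hx : x ∈ L) {r : ℝ} (hr : 0 < r) : (Lᶜ ∩ ball x r).Infinite := by
  by_contra hfin
  rw [Set.not_infinite] at hfin
  have hxS : x ∉ Lᶜ ∩ ball x r := fun h => h.1 hx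
  obtain ⟨r'', hr''pos, hr''⟩ := Metric.isOpen_iff.mp hfin.isClosed.isOpen_compl x hxS
  have hball : ball x (min r'' r) ⊆ closure L := by
    intro a ha
    rcases Classical.em (a ∈ L) with h | h
    · exact subset_closure h
    · exfalso
      have h1 : a ∈ Lᶜ ∩ ball x r :=
        ⟨h, mem_ball.mpr ((mem_ball.mp ha).trans_le (min_le_right _ _))⟩
      have h2 : a ∈ ball x r'' := mem_ball.mpr ((mem_ball.mp ha).trans_le (min_le_left _ _))
      exact hr'' h2 h1
  have : x ∈ interior (closure L) :=
    mem_interior.mpr ⟨ball x (min r'' r), hball, isOpen_ball, mem_ball_self (lt_min hr''pos hr)⟩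
  rw [hLnd] at this
  exact this

lemma my_exists_injOn_into {α β : Type*} {F : Set α} {P : Set β} (hF : F.Finite) (hP : P.Infinite) :
    ∃ e : α → β, (∀ t ∈ F, e t ∈ P) ∧ InjOn e F := by
  classical
  refine Set.Finite.induction_on (motive := fun s _ => ∃ e : α → β, (∀ t ∈ s, e t ∈ P) ∧ InjOn e s)
    F hF ⟨fun _ => hP.nonempty.choose, by simp, by simp [InjOn]⟩ ?_
  rintro a s ha hs ih
  · obtain ⟨e, heP, hinj⟩ := ih
    obtain ⟨p, hpP, hpe⟩ := (hP.diff (hs.image e)).nonempty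
    refine ⟨Function.update e a p, ?_, ?_⟩
    · rintro t (rfl | ht)
      · rw [Function.update_self]; exact hpP
      · rw [Function.update_of_ne (by rintro rfl; exact ha ht)]
        exact heP t ht
    · rintro u (rfl | hu) v (rfl | hv) huv
      · rfl
      · rw [Function.update_self, Function.update_of_ne (by rintro rfl; exact ha hv)] at huv
        exact absurd ⟨v, hv, huv.symm⟩ hpe
      · rw [Function.update_self, Function.update_of_ne (by rintro rfl; exact ha hu)] at huv
        exact absurd ⟨u, hu, huv⟩ hpe
      · rw [Function.update_of_ne (by rintro rfl; exact ha hu),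
            Function.update_of_ne (by rintro rfl; exact ha hv)] at huv
        exact hinj hu hv huv

end AuxLemmas

section DC

private lemma dcStep {α : Type*} {Good : ℕ → α → Prop} {Rel : ℕ → ℕ → α → α → Prop}
    {n : ℕ} {h : ℕ → α}
    (hh : ∀ k, k < n → Good k (h k) ∧ ∀ j, j < k → Rel j k (h j) (h k)) {g : α}
    (hg : Good n g ∧ ∀ j, j < n → Rel j n (h j) g) :
    ∀ k, k < n + 1 → Good k (Function.update h n g k) ∧
      ∀ j, j < k → Rel j k (Function.update h n g j) (Function.update h n g k) := by
  intro k hk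
  rcases Nat.lt_succ_iff_lt_or_eq.mp hk with hk' | rfl
  · refine ⟨?_, ?_⟩
    · rw [Function.update_of_ne hk'.ne]
      exact (hh k hk').1
    · intro j hj
      rw [Function.update_of_ne hk'.ne, Function.update_of_ne (hj.trans hk').ne]
      exact (hh k hk').2 j hj
  · refine ⟨?_, ?_⟩
    · rw [Function.update_self]; exact hg.1
    · intro j hj
      rw [Function.update_self, Function.update_of_ne hj.ne]
      exact hg.2 j hj

private noncomputable def dcAux {α : Type*} (Good : ℕ → α → Prop) (Rel : ℕ → ℕ → α → α → Prop)
    (d : α)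
    (hEX : ∀ n (h : ℕ → α), (∀ k, k < n → Good k (h k)) →
      ∃ g, Good n g ∧ ∀ j, j < n → Rel j n (h j) g) :
    (n : ℕ) → {h : ℕ → α // ∀ k, k < n → Good k (h k) ∧ ∀ j, j < k → Rel j k (h j) (h k)} :=
  Nat.rec ⟨fun _ => d, fun k hk => absurd hk (Nat.not_lt_zero k)⟩
    (fun n p =>
      ⟨Function.update p.1 n (Classical.choose (hEX n p.1 fun k hk => (p.2 k hk).1)),
        dcStep p.2 (Classical.choose_spec (hEX n p.1 fun k hk => (p.2 k hk).1))⟩)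

private lemma dcAux_succ_fst {α : Type*} (Good : ℕ → α → Prop) (Rel : ℕ → ℕ → α → α → Prop)
    (d : α) (hEX : ∀ n (h : ℕ → α), (∀ k, k < n → Good k (h k)) →
      ∃ g, Good n g ∧ ∀ j, j < n → Rel j n (h j) g) (n : ℕ) :
    (dcAux Good Rel d hEX (n + 1)).1 = Function.update (dcAux Good Rel d hEX n).1 n
      (Classical.choose (hEX n (dcAux Good Rel d hEX n).1
        fun k hk => ((dcAux Good Rel d hEX n).2 k hk).1)) := rfl

lemma exists_dc_seq {α : Type*} (Good : ℕ → α → Prop) (Rel : ℕ → ℕ → α → α → Prop) (d : α)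
    (hEX : ∀ n (h : ℕ → α), (∀ k, k < n → Good k (h k)) →
      ∃ g, Good n g ∧ ∀ j, j < n → Rel j n (h j) g) :
    ∃ g : ℕ → α, (∀ n, Good n (g n)) ∧ ∀ j n, j < n → Rel j n (g j) (g n) := by
  set H := dcAux Good Rel d hEX with hH
  have coh : ∀ n k, k < n → (H n).1 k = (H (k + 1)).1 k := by
    intro n
    induction n with
    | zero => intro k hk; exact absurd hk (Nat.not_lt_zero k)
    | succ n ih =>
      intro k hk
      rcases Nat.lt_succ_iff_lt_or_eq.mp hk with hk' | rfl
      · have h1 : (H (n + 1)).1 k = (H n).1 k := by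
          rw [hH, dcAux_succ_fst, Function.update_of_ne hk'.ne]
        rw [h1, ih k hk']
      · rfl
  refine ⟨fun n => (H (n + 1)).1 n, ?_, ?_⟩
  · intro n
    exact ((H (n + 1)).2 n (Nat.lt_succ_self n)).1
  · intro j n hj
    have := ((H (n + 1)).2 n (Nat.lt_succ_self n)).2 j hj
    rwa [coh (n + 1) j (hj.trans (Nat.lt_succ_self n))] at this

end DC

open Set Metric


theorem main_metric {X Ybar : Type*} [MetricSpace X] [MetricSpace Ybar] [CompactSpace Ybar]
    (Y : Set Ybar) (hY : Dense Y)
    (L : Set X) (hLc : IsClosed L) (hLnd : interior (closure L) = ∅)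
    (Φ : X → Set Ybar)
    (hΦne : ∀ x ∈ L, (Φ x).Nonempty) (hΦcomp : ∀ x ∈ L, IsCompact (Φ x))
    (hΦuc : ∀ x ∈ L, ∀ V : Set Ybar, IsOpen V → Φ x ⊆ V →
      ∃ U ∈ nhds x, ∀ u ∈ U ∩ L, Φ u ⊆ V) :
    ∃ A : Set X, A ⊆ (Set.univ : Set X) \ L ∧
      (∀ a ∈ A, ∃ U ∈ nhds a, U ∩ A = {a}) ∧
      closure A \ A = L ∧
      ∃ f : A → Ybar, (∀ a : A, f a ∈ Y) ∧ ∀ x ∈ L, clusterSet f x = Φ x := by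
  classical
  set ε : ℕ → ℝ := fun m => (1/2 : ℝ) ^ m with hεdef
  have hεpos : ∀ m, 0 < ε m := fun m => by positivity
  have hεanti : ∀ {j m : ℕ}, j ≤ m → ε m ≤ ε j := fun {j m} h =>
    pow_le_pow_of_le_one (by norm_num) (by norm_num) h
  have hεlt : ∀ {r : ℝ}, 0 < r → ∃ m, ε m < r := fun {r} hr =>
    exists_pow_lt_of_lt_one hr (by norm_num)
  -- maximal separated nets in L
  have hM' : ∀ m : ℕ, ∃ M ⊆ L, (∀ x ∈ M, ∀ y ∈ M, x ≠ y → ε m ≤ dist x y) ∧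
      ∀ x ∈ L, ∃ c ∈ M, dist x c < ε m := fun m => my_exists_maximal_separated L (hεpos m)
  choose M hML hMsep hMcov using hM'
  -- finite nets in Ybar
  have hG' : ∀ m : ℕ, ∃ G : Set Ybar, G.Finite ∧ ∀ z : Ybar, ∃ t ∈ G, dist z t < ε m := by
    intro m
    obtain ⟨G, hGfin, hGcov⟩ :=
      Metric.totallyBounded_iff.mp (isCompact_univ : IsCompact (univ : Set Ybar)).totallyBounded (ε m) (hεpos m)
    refine ⟨G, hGfin, fun z => ?_⟩
    have := hGcov (mem_univ z)
    simp only [mem_iUnion, exists_prop] at this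
    obtain ⟨t, ht, hz⟩ := this
    exact ⟨t, ht, mem_ball.mp hz⟩
  choose G hGfin hGcov using hG'
  set F : ℕ → X → Set Ybar := fun m c =>
    {t | t ∈ G m ∧ ∃ x ∈ L, dist x c < ε m ∧ ∃ y ∈ Φ x, dist y t < ε m} with hFdef
  have hFfin : ∀ m c, (F m c).Finite := fun m c => (hGfin m).subset fun t ht => ht.1
  have hFne : ∀ m, ∀ c ∈ M m, (F m c).Nonempty := by
    intro m c hc
    obtain ⟨y, hy⟩ := hΦne c (hML m hc)
    obtain ⟨t, htG, hdt⟩ := hGcov m y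
    exact ⟨t, htG, c, hML m hc, by simpa [dist_self] using hεpos m, y, hy, hdt⟩
  -- values
  have hval' : ∀ (m : ℕ) (t : Ybar), ∃ v, v ∈ Y ∧ dist v t < ε m := by
    intro m t
    obtain ⟨v, hvb, hvY⟩ := (Metric.dense_iff.mp hY) t (ε m) (hεpos m)
    exact ⟨v, hvY, mem_ball.mp hvb⟩
  choose val hvalY hvalt using hval'
  -- stage specification
  set Good : ℕ → (X → Ybar → X) → Prop := fun m g =>
    ∀ c ∈ M m, ∀ t ∈ F m c, ((g c t ∉ L) ∧ dist (g c t) c < ε m / 8) ∧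
      ∀ t' ∈ F m c, g c t = g c t' → t = t' with hGooddef
  set Rel : ℕ → ℕ → (X → Ybar → X) → (X → Ybar → X) → Prop := fun j n g g' =>
    ∀ c ∈ M j, ∀ t ∈ F j c, ∀ c' ∈ M n, ∀ t' ∈ F n c', g c t ≠ g' c' t' with hReldef
  -- finiteness of stage positions in small balls
  have hFINpos : ∀ (m : ℕ) (g : X → Ybar → X), Good m g → ∀ (z : X) (r : ℝ), r ≤ ε m / 4 →
      ({a | ∃ c ∈ M m, ∃ t ∈ F m c, g c t = a} ∩ ball z r).Finite := by
    intro m g hg z r hr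
    by_cases hne : ({a | ∃ c ∈ M m, ∃ t ∈ F m c, g c t = a} ∩ ball z r).Nonempty
    · obtain ⟨a₀, ⟨c₀, hc₀, t₀, ht₀, ha₀⟩, hball₀⟩ := hne
      apply ((hFfin m c₀).image (g c₀)).subset
      rintro a ⟨⟨c, hc, t, ht, rfl⟩, hball⟩
      have hcc : c = c₀ := by
        by_contra hne'
        have h1 : dist (g c t) c < ε m / 8 := (hg c hc t ht).1.2
        have h2 : dist (g c₀ t₀) c₀ < ε m / 8 := (hg c₀ hc₀ t₀ ht₀).1.2
        have hsep := hMsep m c hc c₀ hc₀ hne'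
        have e1 : dist c c₀ ≤ dist c (g c t) + dist (g c t) (g c₀ t₀) + dist (g c₀ t₀) c₀ :=
          dist_triangle4 c _ _ c₀
        have e2 : dist (g c t) (g c₀ t₀) ≤ dist (g c t) z + dist z (g c₀ t₀) :=
          dist_triangle _ _ _
        have e3 : dist (g c t) z < r := mem_ball.mp hball
        have e4 : dist z (g c₀ t₀) < r := by
          rw [dist_comm]; rw [← ha₀] at hball₀; exact mem_ball.mp hball₀
        have e5 : dist c (g c t) = dist (g c t) c := dist_comm _ _
        have e6 : dist (g c₀ t₀) c₀ < ε m / 8 := h2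
        linarith [hsep, h1, hεpos m]
      subst hcc
      exact mem_image_of_mem _ ht
    · rw [not_nonempty_iff_eq_empty] at hne
      rw [hne]
      exact finite_empty
  -- stage existence
  have hEX : ∀ n (h : ℕ → X → Ybar → X), (∀ k, k < n → Good k (h k)) →
      ∃ g, Good n g ∧ ∀ j, j < n → Rel j n (h j) g := by
    intro n h hh
    have hpoolinf : ∀ c ∈ M n, ((Lᶜ ∩ ball c (ε n / 8)) \
        (⋃ j ∈ Finset.range n, {a | ∃ c' ∈ M j, ∃ t' ∈ F j c', h j c' t' = a})).Infinite := by
      intro c hc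
      have hforb : ((⋃ j ∈ Finset.range n,
          {a | ∃ c' ∈ M j, ∃ t' ∈ F j c', h j c' t' = a}) ∩ ball c (ε n / 8)).Finite := by
        have : ((⋃ j ∈ Finset.range n,
            {a | ∃ c' ∈ M j, ∃ t' ∈ F j c', h j c' t' = a}) ∩ ball c (ε n / 8)) ⊆
            ⋃ j ∈ Finset.range n,
              ({a | ∃ c' ∈ M j, ∃ t' ∈ F j c', h j c' t' = a} ∩ ball c (ε n / 8)) := by
          rintro a ⟨haU, hab⟩
          simp only [mem_iUnion, exists_prop] at haU ⊢
          obtain ⟨j, hj, hmem⟩ := haU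
          exact ⟨j, hj, hmem, hab⟩
        apply Set.Finite.subset ?_ this
        apply Set.Finite.biUnion (Finset.range n).finite_toSet
        intro j hj
        have hjn : j < n := Finset.mem_range.mp (by simpa using hj)
        refine hFINpos j (h j) (hh j hjn) c (ε n / 8) ?_
        have := hεanti hjn.le
        linarith [hεpos n]
      have hbig : (Lᶜ ∩ ball c (ε n / 8)).Infinite :=
        my_infinite_compl_inter_ball hLnd (hML n hc) (by positivity)
      have hsub : (Lᶜ ∩ ball c (ε n / 8)) \
          ((⋃ j ∈ Finset.range n, {a | ∃ c' ∈ M j, ∃ t' ∈ F j c', h j c' t' = a}) ∩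
            ball c (ε n / 8)) ⊆ (Lᶜ ∩ ball c (ε n / 8)) \
          (⋃ j ∈ Finset.range n, {a | ∃ c' ∈ M j, ∃ t' ∈ F j c', h j c' t' = a}) := by
        rintro a ⟨ha1, ha2⟩
        exact ⟨ha1, fun hmem => ha2 ⟨hmem, ha1.2⟩⟩
      exact ((hbig.diff hforb).mono hsub)
    have hpool : ∀ c, ∃ e : Ybar → X, c ∈ M n → (∀ t ∈ F n c,
        e t ∈ ((Lᶜ ∩ ball c (ε n / 8)) \
          (⋃ j ∈ Finset.range n, {a | ∃ c' ∈ M j, ∃ t' ∈ F j c', h j c' t' = a}))) ∧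
        InjOn e (F n c) := by
      intro c
      by_cases hc : c ∈ M n
      · obtain ⟨e, he1, he2⟩ := my_exists_injOn_into (hFfin n c) (hpoolinf c hc)
        exact ⟨e, fun _ => ⟨he1, he2⟩⟩
      · exact ⟨fun _ => c, fun hc' => absurd hc' hc⟩
    choose e he using hpool
    refine ⟨fun c t => if hc : c ∈ M n then e c t else c, ?_, ?_⟩
    · intro c hc t ht
      simp only [dif_pos hc]
      obtain ⟨he1, he2⟩ := he c hc
      have hmem := he1 t ht
      refine ⟨⟨hmem.1.1, mem_ball.mp hmem.1.2⟩, ?_⟩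
      intro t' ht' heq
      exact he2 ht ht' heq
    · intro j hj c hc t ht c' hc' t' ht'
      simp only [dif_pos hc']
      obtain ⟨he1, _⟩ := he c' hc'
      have hmem := he1 t' ht'
      intro heq
      apply hmem.2
      simp only [mem_iUnion, exists_prop]
      exact ⟨j, Finset.mem_range.mpr hj, c, hc, t, ht, heq⟩
  obtain ⟨g, hGood, hRel⟩ := exists_dc_seq Good Rel (fun x _ => x) hEX

  -- the set A
  set A : Set X := {a | ∃ m, ∃ c ∈ M m, ∃ t ∈ F m c, g m c t = a} with hAdef
  have hAnotL : ∀ a ∈ A, a ∉ L := by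
    rintro a ⟨m, c, hc, t, ht, rfl⟩
    exact ((hGood m) c hc t ht).1.1
  have hUNIQ : ∀ m c t m' c' t', c ∈ M m → t ∈ F m c → c' ∈ M m' → t' ∈ F m' c' →
      g m c t = g m' c' t' → m = m' ∧ c = c' ∧ t = t' := by
    intro m c t m' c' t' hc ht hc' ht' heq
    have hmm : m = m' := by
      by_contra hne
      rcases Nat.lt_or_ge m m' with hlt | hge
      · exact hRel m m' hlt c hc t ht c' hc' t' ht' heq
      · have hlt : m' < m := lt_of_le_of_ne hge fun h => hne h.symm
        exact hRel m' m hlt c' hc' t' ht' c hc t ht heq.symm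
    subst hmm
    have hcc : c = c' := by
      by_contra hne
      have h1 : dist (g m c t) c < ε m / 8 := (hGood m c hc t ht).1.2
      have h2 : dist (g m c' t') c' < ε m / 8 := (hGood m c' hc' t' ht').1.2
      have hsep := hMsep m c hc c' hc' hne
      have e1 : dist c c' ≤ dist c (g m c t) + dist (g m c t) c' := dist_triangle _ _ _
      have e2 : dist c (g m c t) = dist (g m c t) c := dist_comm _ _
      have e3 : dist (g m c t) c' < ε m / 8 := by rw [heq]; exact h2
      linarith [hεpos m]
    subst hcc
    exact ⟨rfl, rfl, (hGood m c hc t ht).2 t' ht' heq⟩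
  have hpick : ∀ a : A, ∃ q : ℕ × X × Ybar,
      q.2.1 ∈ M q.1 ∧ q.2.2 ∈ F q.1 q.2.1 ∧ g q.1 q.2.1 q.2.2 = ↑a := by
    rintro ⟨a, m, c, hc, t, ht, hgt⟩
    exact ⟨(m, c, t), hc, ht, hgt⟩
  choose q hq1 hq2 hq3 using hpick
  set f : A → Ybar := fun a => val (q a).1 (q a).2.2 with hfdef
  have hf : ∀ (m : ℕ) (c : X) (t : Ybar), c ∈ M m → t ∈ F m c → ∀ ha : g m c t ∈ A,
      f ⟨g m c t, ha⟩ = val m t := by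
    intro m c t hc ht ha
    obtain ⟨hm, hc', ht'⟩ := hUNIQ (q ⟨g m c t, ha⟩).1 (q ⟨g m c t, ha⟩).2.1
      (q ⟨g m c t, ha⟩).2.2 m c t (hq1 _) (hq2 _) hc ht (by rw [hq3])
    show val (q ⟨g m c t, ha⟩).1 (q ⟨g m c t, ha⟩).2.2 = val m t
    rw [hm, ht']
  -- isolation of points outside L
  have hISOL : ∀ b : X, b ∉ L → ∃ r > 0, ∀ a ∈ A, dist a b < r → a = b := by
    intro b hb
    obtain ⟨ρ, hρpos, hρball⟩ := Metric.isOpen_iff.mp hLc.isOpen_compl b hb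
    obtain ⟨N, hN⟩ := hεlt hρpos
    set S : Set X := ⋃ m ∈ Finset.range N,
      ({a | ∃ c ∈ M m, ∃ t ∈ F m c, g m c t = a} ∩ ball b (ε N / 4)) with hSdef
    have hSfin : (S \ {b}).Finite := by
      apply Set.Finite.subset ?_ (diff_subset (t := {b}))
      apply Set.Finite.biUnion (Finset.range N).finite_toSet
      intro m hm
      have hmN : m < N := Finset.mem_range.mp (by simpa using hm)
      refine hFINpos m (g m) (hGood m) b (ε N / 4) ?_
      have := hεanti hmN.le; linarith
    have hbS : b ∉ S \ {b} := fun h => h.2 rfl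
    obtain ⟨r₁, hr₁pos, hr₁ball⟩ := Metric.isOpen_iff.mp hSfin.isClosed.isOpen_compl b hbS
    refine ⟨min r₁ (min (ε N / 4) (ρ / 2)), lt_min hr₁pos (lt_min (by positivity) (by positivity)), ?_⟩
    rintro a ⟨m, c, hc, t, ht, rfl⟩ hdist
    rcases Nat.lt_or_ge m N with hmN | hmN
    · have haS : g m c t ∈ S := by
        simp only [hSdef, mem_iUnion, exists_prop]
        refine ⟨m, Finset.mem_range.mpr hmN, ⟨c, hc, t, ht, rfl⟩, mem_ball.mpr ?_⟩
        exact lt_of_lt_of_le hdist (le_trans (min_le_right _ _) (min_le_left _ _))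
      have : g m c t ∈ (S \ {b})ᶜ := hr₁ball (mem_ball.mpr (lt_of_lt_of_le hdist (min_le_left _ _)))
      by_contra hne
      exact this ⟨haS, hne⟩
    · exfalso
      have hcL : c ∈ L := hML m hc
      have hcb : ¬ dist c b < ρ := fun h => hρball (mem_ball.mpr h) hcL
      have e1 : dist c b ≤ dist c (g m c t) + dist (g m c t) b := dist_triangle _ _ _
      have e2 : dist c (g m c t) = dist (g m c t) c := dist_comm _ _
      have e3 : dist (g m c t) c < ε m / 8 := (hGood m c hc t ht).1.2
      have e4 : dist (g m c t) b < ρ / 2 :=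
        lt_of_lt_of_le hdist (le_trans (min_le_right _ _) (min_le_right _ _))
      have e5 : ε m ≤ ε N := hεanti hmN
      exact hcb (by linarith)
  refine ⟨A, ?_, ?_, ?_, f, ?_, ?_⟩
  · intro a ha
    exact ⟨mem_univ a, hAnotL a ha⟩
  · intro a ha
    obtain ⟨r, hrpos, hr⟩ := hISOL a (hAnotL a ha)
    refine ⟨ball a r, ball_mem_nhds a hrpos, ?_⟩
    ext b
    simp only [mem_inter_iff, mem_singleton_iff]
    constructor
    · rintro ⟨hball, hbA⟩
      exact hr b hbA (mem_ball.mp hball)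
    · rintro rfl
      exact ⟨mem_ball_self hrpos, ha⟩
  · apply Set.Subset.antisymm
    · rintro b ⟨hbc, hbA⟩
      by_contra hbL
      obtain ⟨r, hrpos, hr⟩ := hISOL b hbL
      obtain ⟨a, haA, hdist⟩ := Metric.mem_closure_iff.mp hbc r hrpos
      rw [dist_comm] at hdist
      exact hbA ((hr a haA hdist) ▸ haA)
    · intro x hx
      refine ⟨?_, fun hxA => hAnotL x hxA hx⟩
      rw [Metric.mem_closure_iff]
      intro r hrpos
      obtain ⟨m, hm⟩ := hεlt (show (0:ℝ) < r / 2 by positivity)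
      obtain ⟨c, hc, hxc⟩ := hMcov m x hx
      obtain ⟨t, ht⟩ := hFne m c hc
      refine ⟨g m c t, ⟨m, c, hc, t, ht, rfl⟩, ?_⟩
      have e1 : dist x (g m c t) ≤ dist x c + dist c (g m c t) := dist_triangle _ _ _
      have e2 : dist c (g m c t) = dist (g m c t) c := dist_comm _ _
      have e3 : dist (g m c t) c < ε m / 8 := (hGood m c hc t ht).1.2
      linarith [hεpos m]
  · intro a
    exact hvalY _ _
  · intro x hx
    apply Set.Subset.antisymm
    · -- clusterSet f x ⊆ Φ x
      intro z hz
      simp only [clusterSet, mem_iInter] at hz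
      by_contra hzΦ
      have hρ₀pos : 0 < infDist z (Φ x) :=
        (((hΦcomp x hx).isClosed).notMem_iff_infDist_pos (hΦne x hx)).mp hzΦ
      set ρ₀ := infDist z (Φ x) with hρ₀def
      obtain ⟨U₀, hU₀n, hU₀⟩ := hΦuc x hx (Metric.thickening (ρ₀ / 4) (Φ x))
        Metric.isOpen_thickening (Metric.self_subset_thickening (by positivity) _)
      obtain ⟨δ, hδpos, hδball⟩ := Metric.mem_nhds_iff.mp hU₀n
      obtain ⟨N, hN⟩ := hεlt (show (0:ℝ) < min (δ / 2) (ρ₀ / 8) by positivity)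
      have hNδ : ε N < δ / 2 := lt_of_lt_of_le hN (min_le_left _ _)
      have hNρ : ε N < ρ₀ / 8 := lt_of_lt_of_le hN (min_le_right _ _)
      set S : Set X := ⋃ m ∈ Finset.range N,
        ({a | ∃ c ∈ M m, ∃ t ∈ F m c, g m c t = a} ∩ ball x (ε N / 4)) with hSdef
      have hSfin : S.Finite := by
        apply Set.Finite.biUnion (Finset.range N).finite_toSet
        intro m hm
        have hmN : m < N := Finset.mem_range.mp (by simpa using hm)
        refine hFINpos m (g m) (hGood m) x (ε N / 4) ?_
        have := hεanti hmN.le; linarith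
      have hxS : x ∉ S := by
        intro hxS
        simp only [hSdef, mem_iUnion, exists_prop] at hxS
        obtain ⟨m, hm, ⟨c, hc, t, ht, hgt⟩, hball⟩ := hxS
        exact hAnotL x ⟨m, c, hc, t, ht, hgt⟩ hx
      obtain ⟨r₁, hr₁pos, hr₁ball⟩ := Metric.isOpen_iff.mp hSfin.isClosed.isOpen_compl x hxS
      set r := min r₁ (min (ε N / 4) (δ / 4)) with hrdef
      have hrpos : 0 < r := lt_min hr₁pos (lt_min (by positivity) (by positivity))
      have hzU := hz (ball x r) (ball_mem_nhds x hrpos)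
      obtain ⟨v, hvmem, hvdist⟩ := Metric.mem_closure_iff.mp hzU (ρ₀ / 2) (by positivity)
      obtain ⟨aS, haU, rfl⟩ := hvmem
      obtain ⟨a, haA⟩ := aS
      have haU' : a ∈ ball x r := haU
      obtain ⟨m, c, hc, t, ht, hgt⟩ := id haA
      subst hgt
      rw [hf m c t hc ht haA] at hvdist
      have hmN : N ≤ m := by
        by_contra hlt
        push_neg at hlt
        have haS : g m c t ∈ S := by
          simp only [hSdef, mem_iUnion, exists_prop]
          refine ⟨m, Finset.mem_range.mpr hlt, ⟨c, hc, t, ht, rfl⟩, mem_ball.mpr ?_⟩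
          exact lt_of_lt_of_le (mem_ball.mp haU')
            (le_trans (min_le_right _ _) (min_le_left _ _))
        exact hr₁ball (mem_ball.mpr (lt_of_lt_of_le (mem_ball.mp haU') (min_le_left _ _))) haS
      have hεm : ε m ≤ ε N := hεanti hmN
      have htF := ht
      obtain ⟨htG, x'', hx''L, hx''c, y, hyΦ, hyt⟩ := ht
      have hd1 : dist x'' x < δ := by
        have e1 : dist x'' x ≤ dist x'' c + dist c (g m c t) + dist (g m c t) x :=
          dist_triangle4 _ _ _ _
        have e2 : dist c (g m c t) = dist (g m c t) c := dist_comm _ _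
        have e3 : dist (g m c t) c < ε m / 8 := (hGood m c hc t htF).1.2
        have e4 : dist (g m c t) x < δ / 4 :=
          lt_of_lt_of_le (mem_ball.mp haU')
            (le_trans (min_le_right _ _) (min_le_right _ _))
        linarith
      have hx''U : Φ x'' ⊆ Metric.thickening (ρ₀ / 4) (Φ x) :=
        hU₀ x'' ⟨hδball (mem_ball.mpr hd1), hx''L⟩
      obtain ⟨w, hwΦ, hyw⟩ := Metric.mem_thickening_iff.mp (hx''U hyΦ)
      have hzw : ρ₀ ≤ dist z w := infDist_le_dist_of_mem hwΦ
      have e1 : dist z w ≤ dist z (val m t) + dist (val m t) t + dist t w :=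
        dist_triangle4 _ _ _ _
      have e2 : dist t w ≤ dist t y + dist y w := dist_triangle _ _ _
      have e3 : dist t y = dist y t := dist_comm _ _
      have e4 : dist (val m t) t < ε m := hvalt m t
      linarith [hvdist, hyt, hyw]
    · -- Φ x ⊆ clusterSet f x
      intro z hz
      simp only [clusterSet, mem_iInter]
      intro U hU
      obtain ⟨r, hrpos, hrball⟩ := Metric.mem_nhds_iff.mp hU
      rw [Metric.mem_closure_iff]
      intro s hs
      obtain ⟨m, hm⟩ := hεlt (show (0:ℝ) < min (r / 2) (s / 2) by positivity)
      have hmr : ε m < r / 2 := lt_of_lt_of_le hm (min_le_left _ _)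
      have hms : ε m < s / 2 := lt_of_lt_of_le hm (min_le_right _ _)
      obtain ⟨c, hc, hxc⟩ := hMcov m x hx
      obtain ⟨t, htG, hzt⟩ := hGcov m z
      have htF : t ∈ F m c := ⟨htG, x, hx, hxc, z, hz, hzt⟩
      have haA : g m c t ∈ A := ⟨m, c, hc, t, htF, rfl⟩
      have haU : (⟨g m c t, haA⟩ : A) ∈ {a : A | (a : X) ∈ U} := by
        apply hrball
        have e1 : dist (g m c t) x ≤ dist (g m c t) c + dist c x := dist_triangle _ _ _
        have e2 : dist (g m c t) c < ε m / 8 := (hGood m c hc t htF).1.2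
        have e3 : dist c x = dist x c := dist_comm _ _
        exact mem_ball.mpr (by linarith)
      refine ⟨f ⟨g m c t, haA⟩, mem_image_of_mem f haU, ?_⟩
      rw [hf m c t hc htF haA]
      have e1 : dist z (val m t) ≤ dist z t + dist t (val m t) := dist_triangle _ _ _
      have e2 : dist t (val m t) = dist (val m t) t := dist_comm _ _
      linarith [hvalt m t, hzt]

/-- Let `X` be a metrizable topological space, `Y` a dense subspace
of a metrizable compact space `Ȳ`, `L` a closed nowhere dense subset of `X`,
`D = X \ L`, and `Φ` an upper continuous multifunction assigning to each `x ∈ L` a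
nonempty compact subset of `Ȳ`. Then there are a set `A ⊆ D` that is discrete (every
point of `A` has a neighborhood in `X` meeting `A` only in that point) with
`closure A \ A = L`, and a function `f : A → Y` whose cluster set at every `x ∈ L`
equals `Φ x`. -/
theorem exists_discrete_set_and_function_with_clusterSet {X Ybar : Type*}
    [TopologicalSpace X] [TopologicalSpace.MetrizableSpace X]
    [TopologicalSpace Ybar] [TopologicalSpace.MetrizableSpace Ybar] [CompactSpace Ybar]
    (Y : Set Ybar) (hY : Dense Y)
    (L : Set X) (hLc : IsClosed L) (hLnd : interior (closure L) = ∅)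
    (Φ : X → Set Ybar)
    (hΦne : ∀ x ∈ L, (Φ x).Nonempty) (hΦcomp : ∀ x ∈ L, IsCompact (Φ x))
    (hΦuc : ∀ x ∈ L, ∀ V : Set Ybar, IsOpen V → Φ x ⊆ V →
      ∃ U ∈ nhds x, ∀ u ∈ U ∩ L, Φ u ⊆ V) :
    ∃ A : Set X, A ⊆ (Set.univ : Set X) \ L ∧
      (∀ a ∈ A, ∃ U ∈ nhds a, U ∩ A = {a}) ∧
      closure A \ A = L ∧
      ∃ f : A → Ybar, (∀ a : A, f a ∈ Y) ∧ ∀ x ∈ L, clusterSet f x = Φ x := by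
  letI : MetricSpace X := TopologicalSpace.metrizableSpaceMetric X
  letI : MetricSpace Ybar := TopologicalSpace.metrizableSpaceMetric Ybar
  exact main_metric Y hY L hLc hLnd Φ hΦne hΦcomp hΦuc
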